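/- arXiv:1203.3741 — 5 statements merged into one kernel-verified Lean document; each statement's English description precedes it below -/
import Mathlib

section
/- The binary matroid P₉ has a non-minimal exact 3-separation, namely the partition ({1,2,5,6}, {3,4,7,8,9}) of its ground set. -/
open Matroid Set

/-- The rank of a set in a matroid: the largest cardinality of an independent subset. -/
noncomputable def Matroid.rfun {α : Type*} (M : Matroid α) (X : Set α) : ℕ :=
  sSup {n | ∃ I, M.Indep I ∧ I ⊆ X ∧ I.ncard = n}

/-- The connectivity function λ(X) = r(X) + r(E \ X) - r(M). -/
noncomputable def Matroid.lam {α : Type*} (M : Matroid α) (X : Set α) : ℕ :=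
  M.rfun X + M.rfun (M.E \ X) - M.rfun M.E

/-- A circuit: a minimal dependent set. -/
def Matroid.Cct {α : Type*} (M : Matroid α) (C : Set α) : Prop :=
  C ⊆ M.E ∧ ¬ M.Indep C ∧ ∀ D, D ⊂ C → M.Indep D

/-- Deletion of a set of elements. -/
def Matroid.del {α : Type*} (M : Matroid α) (D : Set α) : Matroid α := M.restrict (M.E \ D)

/-- Contraction of a set of elements. -/
def Matroid.con {α : Type*} (M : Matroid α) (C : Set α) : Matroid α := (M✶.del C)✶

/-- Isomorphism of matroids. -/
def MatroidIso {α β : Type*} (M : Matroid α) (N : Matroid β) : Prop :=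
  ∃ e : M.E ≃ N.E, ∀ I : Set M.E, M.Indep ((↑) '' I) ↔ N.Indep ((↑) '' (⇑e '' I))

/-- `M` has a minor isomorphic to `N`. -/
def HasMinorIso {α β : Type*} (M : Matroid α) (N : Matroid β) : Prop :=
  ∃ C D : Set α, MatroidIso ((M.con C).del D) N

/-- `M` is the binary matroid represented by the columns of the matrix `A`. -/
def IsBinaryRep {n m : ℕ} (A : Matrix (Fin n) (Fin m) (ZMod 2)) (M : Matroid (Fin m)) : Prop :=
  M.E = Set.univ ∧
    ∀ I : Set (Fin m), M.Indep I ↔ LinearIndependent (ZMod 2) (fun i : I => A.transpose i.1)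

/-- A matroid is binary if it is representable over GF(2). -/
def IsBinary {α : Type*} (M : Matroid α) : Prop :=
  ∃ (n : ℕ) (v : α → (Fin n → ZMod 2)), ∀ I : Set α, I ⊆ M.E →
    (M.Indep I ↔ LinearIndependent (ZMod 2) (fun x : I => v x.1))

/-- An exact k-separation. -/
noncomputable def ExactSep {α : Type*} (M : Matroid α) (k : ℕ) (A B : Set α) : Prop :=
  A ∪ B = M.E ∧ Disjoint A B ∧ k ≤ A.ncard ∧ k ≤ B.ncard ∧ M.lam A = k - 1

/-- A matroid is 3-connected if it has no k-separation for k ≤ 2. -/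
noncomputable def ThreeConnected {α : Type*} (M : Matroid α) : Prop :=
  ∀ k : ℕ, ∀ A : Set α, 1 ≤ k → k ≤ 2 → A ⊆ M.E → k ≤ A.ncard → k ≤ (M.E \ A).ncard →
    k ≤ M.lam A

/-- `M` is the cycle matroid of the graph `G`. -/
def IsCycleMatroid {V : Type*} (G : SimpleGraph V) (M : Matroid (Sym2 V)) : Prop :=
  M.E = G.edgeSet ∧ ∀ I : Set (Sym2 V),
    M.Indep I ↔ I ⊆ G.edgeSet ∧ (SimpleGraph.fromEdgeSet I).IsAcyclic

/-- The prism graph: two triangles joined by a perfect matching. -/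
def prismGraph : SimpleGraph (Fin 6) :=
  SimpleGraph.fromEdgeSet
    {s(0,1), s(1,2), s(0,2), s(3,4), s(4,5), s(3,5), s(0,3), s(1,4), s(2,5)}

/-- The graph K₅ minus an edge. -/
def K5e : SimpleGraph (Fin 5) := (SimpleGraph.completeGraph (Fin 5)).deleteEdges {s(0,1)}

/-- H is a minor of G: branch-set definition. -/
def GraphMinor {W V : Type*} (H : SimpleGraph W) (G : SimpleGraph V) : Prop :=
  ∃ f : W → Set V, (∀ w, (f w).Nonempty) ∧ (∀ w, (G.induce (f w)).Connected) ∧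
    (Pairwise fun w w' => Disjoint (f w) (f w')) ∧
    ∀ w w', H.Adj w w' → ∃ a ∈ f w, ∃ b ∈ f w', G.Adj a b

/-- A graph is 3-connected. -/
def GraphThreeConnected {V : Type*} (G : SimpleGraph V) : Prop :=
  4 ≤ Nat.card V ∧ ∀ S : Set V, S.ncard < 3 → (G.induce Sᶜ).Connected

def P9mat : Matrix (Fin 4) (Fin 9) (ZMod 2) :=
  !![1,0,0,0,0,1,1,1,1; 0,1,0,0,1,0,1,1,1; 0,0,1,0,1,1,0,1,0; 0,0,0,1,1,1,1,1,0]

def prismMat : Matrix (Fin 5) (Fin 9) (ZMod 2) :=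
  !![1,0,0,0,0,1,0,1,0; 0,1,0,0,0,1,0,0,1; 0,0,1,0,0,0,0,1,1;
     0,0,0,1,0,0,1,1,0; 0,0,0,0,1,0,1,0,1]

def F7mat : Matrix (Fin 3) (Fin 7) (ZMod 2) :=
  !![1,0,0,1,1,0,1; 0,1,0,1,0,1,1; 0,0,1,0,1,1,1]

/-- The matroid `Z_r`: identity columns, then `b₁,…,b_r` (zeros on the diagonal,
ones elsewhere), then the all-ones column `c_r`. -/
def Zrmat (r : ℕ) : Matrix (Fin r) (Fin (2*r+1)) (ZMod 2) := fun i j =>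
  if (j : ℕ) < r then (if (i : ℕ) = (j : ℕ) then 1 else 0)
  else if (j : ℕ) < 2*r then (if (i : ℕ) + r = (j : ℕ) then 0 else 1)
  else 1

def Z4mat : Matrix (Fin 4) (Fin 9) (ZMod 2) :=
  !![1,0,0,0,0,1,1,1,1; 0,1,0,0,1,0,1,1,1; 0,0,1,0,1,1,0,1,1; 0,0,0,1,1,1,1,0,1]

def AG32mat : Matrix (Fin 4) (Fin 8) (ZMod 2) :=
  !![1,1,1,1,1,1,1,1; 0,0,0,0,1,1,1,1; 0,0,1,1,0,0,1,1; 0,1,0,1,0,1,0,1]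

def S8mat : Matrix (Fin 4) (Fin 8) (ZMod 2) :=
  !![1,0,0,0,1,0,1,1; 0,1,0,0,1,1,0,1; 0,0,1,0,1,1,1,0; 0,0,0,1,1,1,1,1]

def E5mat : Matrix (Fin 5) (Fin 10) (ZMod 2) :=
  !![1,0,0,0,0,0,1,1,1,1; 0,1,0,0,0,1,0,1,1,1; 0,0,1,0,0,1,1,0,1,1;
     0,0,0,1,0,1,1,1,1,0; 0,0,0,0,1,1,1,0,0,0]

def R10mat : Matrix (Fin 5) (Fin 10) (ZMod 2) :=
  !![1,0,0,0,0,1,0,0,1,1; 0,1,0,0,0,1,1,0,0,1; 0,0,1,0,0,1,1,1,0,0;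
     0,0,0,1,0,0,1,1,1,0; 0,0,0,0,1,0,0,1,1,1]

def D1mat : Matrix (Fin 4) (Fin 10) (ZMod 2) :=
  !![1,0,0,0,0,1,1,1,1,1; 0,1,0,0,1,0,1,1,1,1; 0,0,1,0,1,1,0,1,0,1; 0,0,0,1,1,1,1,1,0,0]

def D2mat : Matrix (Fin 4) (Fin 10) (ZMod 2) :=
  !![1,0,0,0,0,1,1,1,1,1; 0,1,0,0,1,0,1,1,1,0; 0,0,1,0,1,1,0,1,0,0; 0,0,0,1,1,1,1,1,0,1]

/-- Representation of the generalized parallel connection of F₇ and M(W₃) across the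
triangle consisting of columns 0, 1, 2 (the triangle is {e₁, e₂, e₁+e₂}); column 2
(= e₁+e₂) is the rim element of the triangle. -/
def PFW3mat : Matrix (Fin 4) (Fin 10) (ZMod 2) :=
  !![1,0,1,0,1,0,1,0,1,0; 0,1,1,0,0,1,1,0,0,1; 0,0,0,1,1,1,1,0,0,0; 0,0,0,0,0,0,0,1,1,1]

/-- Representation of the generalized parallel connection of F₇ and F₇ across the
triangle consisting of columns 0, 1, 2. -/
def PFFmat : Matrix (Fin 4) (Fin 11) (ZMod 2) :=
  !![1,0,1,0,1,0,1,0,1,0,1; 0,1,1,0,0,1,1,0,0,1,1; 0,0,0,1,1,1,1,0,0,0,0;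
     0,0,0,0,0,0,0,1,1,1,1]

def Amat : Matrix (Fin 5) (Fin 11) (ZMod 2) :=
  !![1,0,0,0,0,0,1,1,1,1,0; 0,1,0,0,0,1,0,1,1,0,0; 0,0,1,0,0,1,1,0,1,1,1;
     0,0,0,1,0,1,1,1,1,0,0; 0,0,0,0,1,1,1,0,0,0,1]

def Bmat : Matrix (Fin 5) (Fin 11) (ZMod 2) :=
  !![1,0,0,0,0,0,1,1,1,1,1; 0,1,0,0,0,1,0,1,1,0,0; 0,0,1,0,0,1,1,0,1,1,0;
     0,0,0,1,0,1,1,1,1,0,1; 0,0,0,0,1,1,1,0,0,0,1]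

def Cmat : Matrix (Fin 5) (Fin 11) (ZMod 2) :=
  !![1,0,0,0,0,0,1,1,1,1,1; 0,1,0,0,0,1,0,1,1,0,1; 0,0,1,0,0,1,1,0,1,1,0;
     0,0,0,1,0,1,1,1,1,0,0; 0,0,0,0,1,1,1,0,0,0,1]

/-- The matroid Z: R₁₀ extended by the column (0,1,0,1,1)ᵀ. -/
def Zextmat : Matrix (Fin 5) (Fin 11) (ZMod 2) :=
  !![1,0,0,0,0,1,0,0,1,1,0; 0,1,0,0,0,1,1,0,0,1,1; 0,0,1,0,0,1,1,1,0,0,0;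
     0,0,0,1,0,0,1,1,1,0,1; 0,0,0,0,1,0,0,1,1,1,1]

def wheel4Graph : SimpleGraph (Fin 5) :=
  SimpleGraph.fromEdgeSet {s(0,1), s(1,2), s(2,3), s(0,3), s(0,4), s(1,4), s(2,4), s(3,4)}

lemma aux_rank_bound {k : ℕ} (W : Submodule (ZMod 2) (Fin 4 → ZMod 2))
    (hW : Module.finrank (ZMod 2) W ≤ k) (I : Set (Fin 9))
    (h : ∀ i ∈ I, P9mat.transpose i ∈ W)
    (hI : LinearIndependent (ZMod 2) (fun i : I => P9mat.transpose i.1)) :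
    I.ncard ≤ k := by
  classical
  have li : LinearIndependent (ZMod 2)
      (fun i : I => (⟨P9mat.transpose i.1, h i.1 i.2⟩ : W)) := by
    apply LinearIndependent.of_comp W.subtype
    exact hI
  have hc := li.fintype_card_le_finrank
  rw [Set.ncard_eq_toFinset_card']
  calc I.toFinset.card = Fintype.card I := Set.toFinset_card I
    _ ≤ _ := le_trans hc hW

lemma aux_span3 {V : Type*} [AddCommGroup V] [Module (ZMod 2) V] (v1 v2 v3 : V) :
    Module.finrank (ZMod 2) (Submodule.span (ZMod 2) {v1, v2, v3}) ≤ 3 := by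
  classical
  refine (finrank_span_le_card _).trans ?_
  simp only [Set.toFinset_insert, Set.toFinset_singleton]
  refine (Finset.card_insert_le _ _).trans ?_
  have := Finset.card_insert_le v2 ({v3} : Finset V)
  simp at this ⊢
  omega

lemma aux_ncard (s : Finset (Fin 9)) : (↑s : Set (Fin 9)).ncard = s.card :=
  Set.ncard_coe_finset s

/-- P₉ has a non-minimal exact 3-separation ({1,2,5,6}, {3,4,7,8,9})
(zero-indexed: ({0,1,4,5}, {2,3,6,7,8})). -/
theorem stmt_4 (M : Matroid (Fin 9)) (hM : IsBinaryRep P9mat M) :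
    ExactSep M 3 {0, 1, 4, 5} {2, 3, 6, 7, 8} ∧
      4 ≤ ({0, 1, 4, 5} : Set (Fin 9)).ncard ∧
      4 ≤ ({2, 3, 6, 7, 8} : Set (Fin 9)).ncard := by
  classical
  obtain ⟨hE, hInd⟩ := hM
  -- notation
  set A : Set (Fin 9) := {0, 1, 4, 5} with hA
  set B : Set (Fin 9) := {2, 3, 6, 7, 8} with hB
  have hAc : A.ncard = 4 := by
    rw [show A = (↑({0,1,4,5} : Finset (Fin 9)) : Set (Fin 9)) by ext x; simp [hA]]
    rw [Set.ncard_coe_finset]; decide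
  have hBc : B.ncard = 5 := by
    rw [show B = (↑({2,3,6,7,8} : Finset (Fin 9)) : Set (Fin 9)) by ext x; simp [hB]]
    rw [Set.ncard_coe_finset]; decide
  -- rank of A is 3
  have hrA : M.rfun A = 3 := by
    apply le_antisymm
    · apply csSup_le
      · exact ⟨0, ∅, M.empty_indep, Set.empty_subset _, by simp⟩
      · rintro n ⟨I, hI, hIA, rfl⟩
        refine aux_rank_bound (Submodule.span (ZMod 2)
          {P9mat.transpose 0, P9mat.transpose 1, P9mat.transpose 4}) (aux_span3 _ _ _) I ?_
          ((hInd I).mp hI)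
        intro i hi
        have := hIA hi
        simp only [hA, Set.mem_insert_iff, Set.mem_singleton_iff] at this
        rcases this with rfl | rfl | rfl | rfl
        · exact Submodule.subset_span (by simp)
        · exact Submodule.subset_span (by simp)
        · exact Submodule.subset_span (by simp)
        · have he : P9mat.transpose 5 =
              P9mat.transpose 0 + P9mat.transpose 1 + P9mat.transpose 4 := by decide
          rw [he]
          exact Submodule.add_mem _ (Submodule.add_mem _
            (Submodule.subset_span (by simp)) (Submodule.subset_span (by simp)))
            (Submodule.subset_span (by simp))
    · apply le_csSup
      · refine ⟨3, ?_⟩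
        rintro n ⟨I, hI, hIA, rfl⟩
        refine aux_rank_bound (Submodule.span (ZMod 2)
          {P9mat.transpose 0, P9mat.transpose 1, P9mat.transpose 4}) (aux_span3 _ _ _) I ?_
          ((hInd I).mp hI)
        intro i hi
        have := hIA hi
        simp only [hA, Set.mem_insert_iff, Set.mem_singleton_iff] at this
        rcases this with rfl | rfl | rfl | rfl
        · exact Submodule.subset_span (by simp)
        · exact Submodule.subset_span (by simp)
        · exact Submodule.subset_span (by simp)
        · have he : P9mat.transpose 5 =
              P9mat.transpose 0 + P9mat.transpose 1 + P9mat.transpose 4 := by decide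
          rw [he]
          exact Submodule.add_mem _ (Submodule.add_mem _
            (Submodule.subset_span (by simp)) (Submodule.subset_span (by simp)))
            (Submodule.subset_span (by simp))
      · refine ⟨{0, 1, 4}, ?_, ?_, ?_⟩
        · rw [hInd]
          rw [Fintype.linearIndependent_iff]
          decide
        · intro x hx
          simp only [Set.mem_insert_iff, Set.mem_singleton_iff] at hx
          rcases hx with rfl | rfl | rfl <;> simp [hA]
        · rw [show ({0,1,4} : Set (Fin 9)) = (↑({0,1,4} : Finset (Fin 9)) : Set (Fin 9))
            by ext x; simp]
          rw [Set.ncard_coe_finset]; decide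
  -- rank of B is 3
  have hrB : M.rfun B = 3 := by
    have hmemB : ∀ I : Set (Fin 9), I ⊆ B → ∀ i ∈ I, P9mat.transpose i ∈
        Submodule.span (ZMod 2)
          {P9mat.transpose 2, P9mat.transpose 3, P9mat.transpose 6} := by
      intro I hIB i hi
      have := hIB hi
      simp only [hB, Set.mem_insert_iff, Set.mem_singleton_iff] at this
      rcases this with rfl | rfl | rfl | rfl | rfl
      · exact Submodule.subset_span (by simp)
      · exact Submodule.subset_span (by simp)
      · exact Submodule.subset_span (by simp)
      · have he : P9mat.transpose 7 = P9mat.transpose 6 + P9mat.transpose 2 := by decide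
        rw [he]
        exact Submodule.add_mem _ (Submodule.subset_span (by simp))
          (Submodule.subset_span (by simp))
      · have he : P9mat.transpose 8 = P9mat.transpose 6 + P9mat.transpose 3 := by decide
        rw [he]
        exact Submodule.add_mem _ (Submodule.subset_span (by simp))
          (Submodule.subset_span (by simp))
    apply le_antisymm
    · apply csSup_le
      · exact ⟨0, ∅, M.empty_indep, Set.empty_subset _, by simp⟩
      · rintro n ⟨I, hI, hIB, rfl⟩
        exact aux_rank_bound _ (aux_span3 _ _ _) I (hmemB I hIB) ((hInd I).mp hI)
    · apply le_csSup
      · refine ⟨3, ?_⟩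
        rintro n ⟨I, hI, hIB, rfl⟩
        exact aux_rank_bound _ (aux_span3 _ _ _) I (hmemB I hIB) ((hInd I).mp hI)
      · refine ⟨{2, 3, 6}, ?_, ?_, ?_⟩
        · rw [hInd]
          rw [Fintype.linearIndependent_iff]
          decide
        · intro x hx
          simp only [Set.mem_insert_iff, Set.mem_singleton_iff] at hx
          rcases hx with rfl | rfl | rfl <;> simp [hB]
        · rw [show ({2,3,6} : Set (Fin 9)) = (↑({2,3,6} : Finset (Fin 9)) : Set (Fin 9))
            by ext x; simp]
          rw [Set.ncard_coe_finset]; decide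
  -- rank of E is 4
  have hrE : M.rfun M.E = 4 := by
    apply le_antisymm
    · apply csSup_le
      · exact ⟨0, ∅, M.empty_indep, Set.empty_subset _, by simp⟩
      · rintro n ⟨I, hI, hIE, rfl⟩
        have li := (hInd I).mp hI
        have hc := li.fintype_card_le_finrank
        rw [Set.ncard_eq_toFinset_card']
        calc I.toFinset.card = Fintype.card I := Set.toFinset_card I
          _ ≤ _ := le_trans hc (by simp)
    · apply le_csSup
      · refine ⟨4, ?_⟩
        rintro n ⟨I, hI, hIE, rfl⟩
        have li := (hInd I).mp hI
        have hc := li.fintype_card_le_finrank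
        rw [Set.ncard_eq_toFinset_card']
        calc I.toFinset.card = Fintype.card I := Set.toFinset_card I
          _ ≤ _ := le_trans hc (by simp)
      · refine ⟨{0, 1, 2, 3}, ?_, ?_, ?_⟩
        · rw [hInd]
          rw [Fintype.linearIndependent_iff]
          decide
        · rw [hE]; exact Set.subset_univ _
        · rw [show ({0,1,2,3} : Set (Fin 9)) = (↑({0,1,2,3} : Finset (Fin 9)) : Set (Fin 9))
            by ext x; simp]
          rw [Set.ncard_coe_finset]; decide
  have hcompl : M.E \ A = B := by
    rw [hE]; ext x; revert x; decide
  have hlam : M.lam A = 2 := by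
    unfold Matroid.lam
    rw [hcompl, hrA, hrB, hrE]
  refine ⟨⟨?_, ?_, ?_, ?_, ?_⟩, ?_, ?_⟩
  · rw [hE]; ext x; revert x; decide
  · rw [Set.disjoint_left]; intro x; revert x; decide
  · omega
  · omega
  · rw [hlam]
  · omega
  · omega
end

section
/- For every r ≥ 4, the matroid Zᵣ is non-regular; in particular it has a minor isomorphic to the Fano matroid F₇ or its dual F₇*. -/
open Matroid Set

section ZrAux

open Finsupp

/-- Independence in a contraction by an independent set. -/
lemma Matroid.con_indep_iff {α : Type*} (M : Matroid α) {C I : Set α} (hC : M.Indep C)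
    (hIE : I ⊆ M.E) (hIC : Disjoint I C) :
    (M.con C).Indep I ↔ M.Indep (I ∪ C) := by
  have hXE : M✶.E \ C ⊆ M✶.E := diff_subset
  rw [Matroid.con, Matroid.del, Matroid.dual_indep_iff_exists']
  constructor
  · rintro ⟨hIsub, B, hB, hIB⟩
    have hB' : M✶.IsBasis B (M✶.E \ C) := (Matroid.isBase_restrict_iff hXE).1 hB
    obtain ⟨B₁, hB₁, hBB₁⟩ :=
      (Matroid.dual_indep_iff_exists (M := M) (I := B)
        (by simpa using hB'.indep.subset_ground)).1 hB'.indep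
    obtain ⟨B₂, hB₂, hCB₂, hB₂sub⟩ := hC.exists_isBase_subset_union_isBase hB₁
    have hB₂B : Disjoint B₂ B := by
      refine Set.disjoint_left.2 fun x hx hxB => ?_
      rcases hB₂sub hx with h | h
      · exact (hB'.subset hxB).2 h
      · exact Set.disjoint_left.1 hBB₁ hxB h
    have hIB₂ : I ⊆ B₂ := by
      intro x hx
      have hxX : x ∈ (M✶.E \ C) \ B :=
        ⟨⟨hIE hx, fun hc => hIC.le_bot ⟨hx, hc⟩⟩, fun hb => hIB.le_bot ⟨hx, hb⟩⟩
      have hdep := hB'.insert_dep hxX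
      rw [Matroid.dual_dep_iff_forall] at hdep
      obtain ⟨y, hy⟩ := hdep.1 B₂ hB₂
      rcases hy.1 with rfl | hyB
      · exact hy.2
      · exact absurd hy.2 fun h2 => Set.disjoint_left.1 hB₂B h2 hyB
    exact hB₂.indep.subset (Set.union_subset hIB₂ hCB₂)
  · intro h
    obtain ⟨B₀, hB₀, hICB₀⟩ := h.exists_isBase_superset
    have hCB₀ : C ⊆ B₀ := (Set.union_subset_iff.1 hICB₀).2
    have hIB₀ : I ⊆ B₀ := (Set.union_subset_iff.1 hICB₀).1
    refine ⟨Set.subset_diff.2 ⟨hIE, hIC⟩, M.E \ B₀, ?_, ?_⟩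
    · rw [Matroid.isBase_restrict_iff hXE, Matroid.isBasis_iff hXE]
      exact ⟨hB₀.compl_isBase_dual.indep, Set.diff_subset_diff_right hCB₀,
        fun J hJ hBJ _ => hB₀.compl_isBase_dual.eq_of_subset_indep hJ hBJ⟩
    · exact Set.disjoint_left.2 fun x hx hxc => hxc.2 (hIB₀ hx)

/-- The set of contracted columns: these are `e_4, …, e_r`. -/
def CsetZ (r : ℕ) : Set (Fin (2*r+1)) := {j | 3 ≤ (j : ℕ) ∧ (j : ℕ) < r}

/-- The set of deleted columns: these are `b_4, …, b_r`. -/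
def DsetZ (r : ℕ) : Set (Fin (2*r+1)) := {j | r + 3 ≤ (j : ℕ) ∧ (j : ℕ) < 2*r}

/-- Projection to the first three coordinates. -/
def Zpi {r : ℕ} (hr : 4 ≤ r) : (Fin r → ZMod 2) →ₗ[ZMod 2] (Fin 3 → ZMod 2) :=
  LinearMap.funLeft _ _ (Fin.castLE (by omega))

lemma Zcol_of_lt {r : ℕ} (j : Fin (2*r+1)) (hj : (j : ℕ) < r) :
    (Zrmat r).transpose j = fun i : Fin r => (if (i : ℕ) = (j : ℕ) then 1 else 0 : ZMod 2) := by
  funext i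
  simp only [Matrix.transpose_apply, Zrmat, if_pos hj]

lemma Zpi_col_C {r : ℕ} (hr : 4 ≤ r) (j : Fin (2*r+1)) (hj : j ∈ CsetZ r) :
    Zpi hr ((Zrmat r).transpose j) = 0 := by
  funext i
  rw [Zpi, LinearMap.funLeft_apply, Zcol_of_lt j hj.2]
  have h2 : ¬ (i : ℕ) = (j : ℕ) := by have := i.isLt; have := hj.1; omega
  simp [Fin.coe_castLE, h2]

lemma Ccols_li (r : ℕ) :
    LinearIndependent (ZMod 2) (fun x : CsetZ r => (Zrmat r).transpose x.1) := by
  classical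
  have h : (fun x : CsetZ r => (Zrmat r).transpose x.1) =
      fun x : CsetZ r => (Pi.basisFun (ZMod 2) (Fin r)) ⟨(x.1 : ℕ), x.2.2⟩ := by
    funext x
    rw [Zcol_of_lt x.1 x.2.2, Pi.basisFun_apply]
    funext i
    rw [Pi.single_apply]
    by_cases h : (i : ℕ) = (x.1 : ℕ)
    · rw [if_pos h, if_pos (Fin.ext h)]
    · rw [if_neg h, if_neg (fun hh => h (congrArg Fin.val hh))]
  rw [h]
  refine (Pi.basisFun (ZMod 2) (Fin r)).linearIndependent.comp _ (fun a b hab => ?_)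
  have h2 := congrArg Fin.val hab
  exact Subtype.ext (Fin.ext h2)


lemma key_li {r : ℕ} (hr : 4 ≤ r) {J : Set (Fin (2*r+1))} (hJC : Disjoint J (CsetZ r)) :
    LinearIndependent (ZMod 2) (fun x : ↥(J ∪ CsetZ r) => (Zrmat r).transpose x.1) ↔
      LinearIndependent (ZMod 2) (fun x : ↥J => Zpi hr ((Zrmat r).transpose x.1)) := by
  classical
  have hCfin : ∀ l ∈ Finsupp.supported (ZMod 2) (ZMod 2) (CsetZ r),
      Finsupp.linearCombination (ZMod 2) ((Zrmat r).transpose) l = 0 → l = 0 :=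
    (linearIndepOn_iff (v := (Zrmat r).transpose)).1 (Ccols_li r)
  constructor
  · intro hU
    have hU' := (linearIndepOn_iff (v := (Zrmat r).transpose)).1 hU
    refine (linearIndepOn_iff
      (v := fun j => Zpi hr ((Zrmat r).transpose j))).2 ?_
    intro l hl hl0
    have hlsupp' := (Finsupp.mem_supported' (ZMod 2) l).1 hl
    set v := Finsupp.linearCombination (ZMod 2) ((Zrmat r).transpose) l with hv
    have hπv : Zpi hr v = 0 := by
      have h5 := Finsupp.apply_linearCombination (ZMod 2) (Zpi hr) ((Zrmat r).transpose) l
      rw [hv, h5]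
      exact hl0
    set f : Fin (2*r+1) → ZMod 2 :=
      fun j => if h : 3 ≤ (j : ℕ) ∧ (j : ℕ) < r then v ⟨(j : ℕ), h.2⟩ else 0 with hf
    set w := (Finsupp.linearEquivFunOnFinite (ZMod 2) (ZMod 2) (Fin (2*r+1))).symm f with hwdef
    have hwapp : ∀ j, w j = f j := fun j => rfl
    have hfpos : ∀ (j : Fin (2*r+1)) (h : 3 ≤ (j : ℕ) ∧ (j : ℕ) < r),
        f j = v ⟨(j : ℕ), h.2⟩ := fun j h => dif_pos h
    have hfneg : ∀ (j : Fin (2*r+1)), ¬ (3 ≤ (j : ℕ) ∧ (j : ℕ) < r) → f j = 0 :=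
      fun j h => dif_neg h
    have hwcomb : Finsupp.linearCombination (ZMod 2) ((Zrmat r).transpose) w = v := by
      rw [hwdef, Finsupp.linearCombination_eq_fintype_linearCombination_apply (ZMod 2) ((Zrmat r).transpose),
        Fintype.linearCombination_apply (R := ZMod 2) (v := (Zrmat r).transpose)]
      funext i
      rw [Finset.sum_apply]
      by_cases hi : (i : ℕ) < 3
      · have hvi : v i = 0 := by
          have h3 := congrFun hπv ⟨(i : ℕ), hi⟩
          have h4 : Fin.castLE (by omega : 3 ≤ r) ⟨(i : ℕ), hi⟩ = i := Fin.ext rfl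
          rw [Zpi, LinearMap.funLeft_apply, h4] at h3
          exact h3
        rw [hvi]
        refine Finset.sum_eq_zero fun j _ => ?_
        rw [Pi.smul_apply]
        by_cases hj : 3 ≤ (j : ℕ) ∧ (j : ℕ) < r
        · have hz : ((Zrmat r).transpose j) i = 0 := by
            rw [Zcol_of_lt j hj.2]
            exact if_neg (by omega)
          rw [hz, smul_zero]
        · rw [hfneg j hj, zero_smul]
      · push_neg at hi
        have hir := i.isLt
        rw [Finset.sum_eq_single (⟨(i : ℕ), by omega⟩ : Fin (2*r+1))]
        · rw [Pi.smul_apply]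
          have h1 : f (⟨(i : ℕ), by omega⟩ : Fin (2*r+1)) = v i := by
            rw [hfpos _ ⟨hi, hir⟩]
          have h2 : ((Zrmat r).transpose (⟨(i : ℕ), by omega⟩ : Fin (2*r+1))) i = 1 := by
            rw [Zcol_of_lt _ (show ((⟨(i : ℕ), by omega⟩ : Fin (2*r+1)) : ℕ) < r from hir)]
            exact if_pos rfl
          rw [h1, h2, smul_eq_mul, mul_one]
        · intro j _ hne
          rw [Pi.smul_apply]
          by_cases hj : 3 ≤ (j : ℕ) ∧ (j : ℕ) < r
          · have hz : ((Zrmat r).transpose j) i = 0 := by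
              rw [Zcol_of_lt j hj.2]
              refine if_neg fun hh => hne (Fin.ext ?_)
              exact hh.symm
            rw [hz, smul_zero]
          · rw [hfneg j hj, zero_smul]
        · intro hna
          exact absurd (Finset.mem_univ _) hna
    have hvv : v + v = 0 := by
      funext i
      exact CharTwo.add_self_eq_zero (v i)
    have hsupp : l + w ∈ Finsupp.supported (ZMod 2) (ZMod 2) (J ∪ CsetZ r) := by
      refine (Finsupp.mem_supported' (ZMod 2) _).2 fun x hx => ?_
      rw [Finsupp.add_apply, hlsupp' x (fun hxJ => hx (Set.mem_union_left _ hxJ)), hwapp,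
        hfneg x (fun hc => hx (Set.mem_union_right _ hc)), add_zero]
    have hlw : l + w = 0 := hU' (l + w) hsupp (by rw [map_add, ← hv, hwcomb]; exact hvv)
    ext j
    rw [Finsupp.coe_zero, Pi.zero_apply]
    by_cases hjJ : j ∈ J
    · have h0 : l j + w j = 0 := by rw [← Finsupp.add_apply, hlw, Finsupp.coe_zero, Pi.zero_apply]
      have hwj : w j = 0 := by
        rw [hwapp, hfneg j (fun hc => Set.disjoint_left.1 hJC hjJ hc)]
      rw [hwj, add_zero] at h0
      exact h0
    · exact hlsupp' j hjJ
  · intro hP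
    have hP' := (linearIndepOn_iff
      (v := fun j => Zpi hr ((Zrmat r).transpose j))).1 hP
    refine (linearIndepOn_iff (v := (Zrmat r).transpose)).2 ?_
    intro l hl hl0
    have hsplit := Finsupp.filter_pos_add_filter_neg l (fun x => x ∈ J)
    have hlJsupp : l.filter (fun x => x ∈ J) ∈ Finsupp.supported (ZMod 2) (ZMod 2) J :=
      (Finsupp.mem_supported' (ZMod 2) _).2 fun x hx => Finsupp.filter_apply_neg _ _ hx
    have hlCsupp : l.filter (fun x => ¬ x ∈ J) ∈
        Finsupp.supported (ZMod 2) (ZMod 2) (CsetZ r) := by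
      refine (Finsupp.mem_supported' (ZMod 2) _).2 fun x hx => ?_
      by_cases hxJ : x ∈ J
      · exact Finsupp.filter_apply_neg _ _ (by simpa using hxJ)
      · rw [Finsupp.filter_apply_pos (fun x => ¬ x ∈ J) l hxJ]
        refine (Finsupp.mem_supported' (ZMod 2) l).1 hl x ?_
        intro hmem
        rcases hmem with h | h
        · exact hxJ h
        · exact hx h
    have hπl : Finsupp.linearCombination (ZMod 2)
        (fun j => Zpi hr ((Zrmat r).transpose j)) l = 0 := by
      have h5 := Finsupp.apply_linearCombination (ZMod 2) (Zpi hr) ((Zrmat r).transpose) l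
      rw [hl0, map_zero] at h5
      exact h5.symm
    have hCzero : Finsupp.linearCombination (ZMod 2)
        (fun j => Zpi hr ((Zrmat r).transpose j)) (l.filter (fun x => ¬ x ∈ J)) = 0 := by
      rw [Finsupp.linearCombination_apply, Finsupp.sum]
      refine Finset.sum_eq_zero fun j hj => ?_
      rw [Zpi_col_C hr j ((Finsupp.mem_supported (ZMod 2) _).1 hlCsupp hj), smul_zero]
    have hπlJ : Finsupp.linearCombination (ZMod 2)
        (fun j => Zpi hr ((Zrmat r).transpose j)) (l.filter (fun x => x ∈ J)) = 0 := by
      have h4 : Finsupp.linearCombination (ZMod 2)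
            (fun j => Zpi hr ((Zrmat r).transpose j)) (l.filter (fun x => x ∈ J)) +
          Finsupp.linearCombination (ZMod 2)
            (fun j => Zpi hr ((Zrmat r).transpose j)) (l.filter (fun x => ¬ x ∈ J)) =
          Finsupp.linearCombination (ZMod 2)
            (fun j => Zpi hr ((Zrmat r).transpose j)) l := by
        rw [← map_add, hsplit]
      rw [hCzero, add_zero, hπl] at h4
      exact h4
    have hlJ0 : l.filter (fun x => x ∈ J) = 0 := hP' _ hlJsupp hπlJ
    have hlCl : l.filter (fun x => ¬ x ∈ J) = l := by
      conv_rhs => rw [← hsplit]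
      rw [hlJ0, zero_add]
    have hC0 : Finsupp.linearCombination (ZMod 2) ((Zrmat r).transpose)
        (l.filter (fun x => ¬ x ∈ J)) = 0 := by rw [hlCl]; exact hl0
    have hfin : l.filter (fun x => ¬ x ∈ J) = 0 := hCfin _ hlCsupp hC0
    rw [← hsplit, hlJ0, hfin, add_zero]

/-- The embedding of the seven retained columns. -/
def gZ (r : ℕ) (hr : 4 ≤ r) : Fin 7 → Fin (2*r+1) := fun k =>
  ⟨if (k : ℕ) = 0 then 0 else if (k : ℕ) = 1 then 1 else if (k : ℕ) = 2 then 2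
    else if (k : ℕ) = 3 then r+2 else if (k : ℕ) = 4 then r+1 else if (k : ℕ) = 5 then r
    else 2*r, by split_ifs <;> omega⟩

lemma gZ_injective {r : ℕ} (hr : 4 ≤ r) : Function.Injective (gZ r hr) := by
  intro a b hab
  have h := congrArg Fin.val hab
  simp only [gZ] at h
  have ha := a.isLt
  have hb := b.isLt
  apply Fin.ext
  split_ifs at h <;> omega

lemma gZ_col {r : ℕ} (hr : 4 ≤ r) (k : Fin 7) :
    Zpi hr ((Zrmat r).transpose (gZ r hr k)) = F7mat.transpose k := by
  funext i
  rw [Zpi, LinearMap.funLeft_apply, Matrix.transpose_apply, Matrix.transpose_apply]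
  fin_cases k <;> fin_cases i <;>
    simp only [gZ, Zrmat, F7mat, Fin.coe_castLE, Fin.isValue] <;>
    norm_num <;> intros <;> first | omega | (split_ifs <;> first | rfl | omega)

end ZrAux

/-- For r ≥ 4, the matroid Zᵣ is non-regular: it has a minor isomorphic to F₇ or F₇*. -/
theorem stmt_7 (r : ℕ) (hr : 4 ≤ r) (Z : Matroid (Fin (2*r+1))) (hZ : IsBinaryRep (Zrmat r) Z)
    (F : Matroid (Fin 7)) (hF : IsBinaryRep F7mat F) :
    HasMinorIso Z F ∨ HasMinorIso Z F✶ := by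
  classical
  left
  refine ⟨CsetZ r, DsetZ r, ?_⟩
  have hZE := hZ.1
  have hFE := hF.1
  have ginj := gZ_injective (r := r) hr
  have hCind : Z.Indep (CsetZ r) := (hZ.2 (CsetZ r)).2 (Ccols_li r)
  have hNEeq : ((Z.con (CsetZ r)).del (DsetZ r)).E = (Z.E \ CsetZ r) \ DsetZ r := rfl
  have hNE : ((Z.con (CsetZ r)).del (DsetZ r)).E = Set.range (gZ r hr) := by
    rw [hNEeq, hZE]
    ext x
    simp only [Set.mem_diff, Set.mem_univ, true_and, Set.mem_range, CsetZ, DsetZ,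
      Set.mem_setOf_eq, not_and, not_lt]
    constructor
    · rintro ⟨h1, h2⟩
      have hx := x.isLt
      have hcase : (x : ℕ) = 0 ∨ (x : ℕ) = 1 ∨ (x : ℕ) = 2 ∨ (x : ℕ) = r ∨ (x : ℕ) = r+1 ∨
          (x : ℕ) = r+2 ∨ (x : ℕ) = 2*r := by omega
      rcases hcase with h | h | h | h | h | h | h
      · exact ⟨⟨0, by omega⟩, Fin.ext (by simp only [gZ]; norm_num; omega)⟩
      · exact ⟨⟨1, by omega⟩, Fin.ext (by simp only [gZ]; norm_num; omega)⟩
      · exact ⟨⟨2, by omega⟩, Fin.ext (by simp only [gZ]; norm_num; omega)⟩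
      · exact ⟨⟨5, by omega⟩, Fin.ext (by simp only [gZ]; norm_num; omega)⟩
      · exact ⟨⟨4, by omega⟩, Fin.ext (by simp only [gZ]; norm_num; omega)⟩
      · exact ⟨⟨3, by omega⟩, Fin.ext (by simp only [gZ]; norm_num; omega)⟩
      · exact ⟨⟨6, by omega⟩, Fin.ext (by simp only [gZ]; norm_num; omega)⟩
    · rintro ⟨k, rfl⟩
      fin_cases k <;> simp only [gZ] <;> norm_num <;> omega
  set eqv : ↥((Z.con (CsetZ r)).del (DsetZ r)).E ≃ ↥F.E :=
    (Equiv.setCongr hNE).trans (((Equiv.ofInjective _ ginj).symm).trans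
      ((Equiv.Set.univ (Fin 7)).symm.trans (Equiv.setCongr hFE.symm))) with heqv
  refine ⟨eqv, ?_⟩
  have he : ∀ x : ↥((Z.con (CsetZ r)).del (DsetZ r)).E,
      gZ r hr ((eqv x : Fin 7)) = (x : Fin (2*r+1)) := by
    intro x
    have h1 : ((eqv x : Fin 7)) =
        (Equiv.ofInjective _ ginj).symm ⟨(x : Fin (2*r+1)), hNE ▸ x.2⟩ := rfl
    rw [h1, Equiv.apply_ofInjective_symm ginj]
  intro I
  have hgK : gZ r hr '' (Subtype.val '' (eqv '' I)) = Subtype.val '' I := by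
    rw [Set.image_image, Set.image_image]
    exact Set.image_congr fun x _ => he x
  have hJN : Subtype.val '' I ⊆ (Z.E \ CsetZ r) \ DsetZ r := by
    rw [← hNEeq]
    exact Subtype.coe_image_subset _ I
  have hJC : Disjoint (Subtype.val '' I) (CsetZ r) :=
    Set.disjoint_left.2 fun x hx hxC => (hJN hx).1.2 hxC
  have hJE : Subtype.val '' I ⊆ Z.E := fun x hx => (hJN hx).1.1
  have hdel : ((Z.con (CsetZ r)).del (DsetZ r)).Indep (Subtype.val '' I) ↔
      (Z.con (CsetZ r)).Indep (Subtype.val '' I) ∧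
        Subtype.val '' I ⊆ (Z.con (CsetZ r)).E \ DsetZ r := Matroid.restrict_indep_iff
  have hbr : LinearIndependent (ZMod 2)
      (fun x : ↥(Subtype.val '' I) => Zpi hr ((Zrmat r).transpose x.1)) ↔
      LinearIndependent (ZMod 2)
      (fun x : ↥(Subtype.val '' (eqv '' I)) => F7mat.transpose x.1) := by
    let eimg : ↥(Subtype.val '' (eqv '' I)) ≃ ↥(Subtype.val '' I) :=
      (Equiv.Set.image _ _ ginj).trans (Equiv.setCongr hgK)
    refine (linearIndependent_equiv' eimg ?_).symm
    funext k
    show Zpi hr ((Zrmat r).transpose ((eimg k : ↥(Subtype.val '' I)) : Fin (2*r+1))) =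
      F7mat.transpose (k : Fin 7)
    have hval : ((eimg k : ↥(Subtype.val '' I)) : Fin (2*r+1)) = gZ r hr (k : Fin 7) := by
      simp [eimg, Equiv.Set.image_apply, Equiv.trans_apply, Equiv.setCongr_apply]
    rw [hval, gZ_col hr]
  rw [hdel, Matroid.con_indep_iff Z hCind hJE hJC, hZ.2, key_li hr hJC, hF.2, hbr]
  exact and_iff_left hJN
end

section
/- The matroid Z₄ with the column c₄ deleted is isomorphic to the binary affine geometry AG(3,2). -/
open Matroid Set

def gfun : Fin 9 → Fin 8 := ![0,4,2,1,7,3,5,6,0]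
def ginvf : Fin 8 → Fin 9 := ![0,3,2,5,1,6,7,4]
def Tm : Matrix (Fin 4) (Fin 4) (ZMod 2) := !![1,1,1,1;0,1,0,0;0,0,1,0;0,0,0,1]

lemma hgg : ∀ x : Fin 9, x ≠ 8 → ginvf (gfun x) = x := by decide
lemma hgg' : ∀ y : Fin 8, gfun (ginvf y) = y := by decide
lemma hginv8 : ∀ y : Fin 8, ginvf y ≠ 8 := by decide
lemma hginj : ∀ a b : Fin 9, a ≠ 8 → b ≠ 8 → gfun a = gfun b → a = b := by decide
lemma hcol : ∀ x : Fin 9, x ≠ 8 →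
    Tm.mulVec (fun i => Z4mat i x) = (fun i => AG32mat i (gfun x)) := by decide
lemma hTT : ∀ v : Fin 4 → ZMod 2, Tm.mulVec (Tm.mulVec v) = v := by decide

/-- Z₄ with the column c₄ (index 8) deleted is isomorphic to AG(3,2). -/
theorem stmt_8 (M : Matroid (Fin 9)) (hM : IsBinaryRep Z4mat M)
    (N : Matroid (Fin 8)) (hN : IsBinaryRep AG32mat N) :
    MatroidIso (M.del {8}) N := by
  obtain ⟨hE, hI⟩ := hM
  obtain ⟨hE', hI'⟩ := hN
  have hground : (M.del {8}).E = M.E \ {8} := by simp [Matroid.del]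
  have hmem : ∀ x : Fin 9, x ∈ (M.del {8}).E ↔ x ≠ 8 := by
    intro x; rw [hground, hE]; simp
  refine ⟨⟨fun x => ⟨gfun x.1, by rw [hE']; trivial⟩,
    fun y => ⟨ginvf y.1, (hmem _).mpr (hginv8 y.1)⟩,
    fun x => Subtype.ext (hgg x.1 ((hmem x.1).mp x.2)),
    fun y => Subtype.ext (hgg' y.1)⟩, ?_⟩
  intro I
  set J : Set (Fin 9) := (↑) '' I with hJ
  have hJ8 : ∀ x ∈ J, x ≠ 8 := by
    rintro _ ⟨x, hx, rfl⟩; exact (hmem _).mp x.2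
  have hSimg : (Subtype.val '' ((fun a : ↥(M.del {8}).E =>
      (⟨gfun ↑a, by rw [hE']; trivial⟩ : ↥N.E)) '' I)) = gfun '' J := by
    rw [hJ, Set.image_image, Set.image_image]
  have hinjOn : Set.InjOn gfun J := fun a ha b hb hab =>
    hginj a b (hJ8 a ha) (hJ8 b hb) hab
  simp only [Matroid.del, Matroid.restrict_indep_iff, hI, hI']
  have hsub : J ⊆ M.E \ {8} := by
    rintro _ ⟨x, hx, rfl⟩
    exact hground ▸ x.2
  simp only [and_iff_left hsub, Equiv.coe_fn_mk]
  refine Iff.trans ?_ (iff_of_eq (congrArg (fun S : Set (Fin 8) =>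
    LinearIndependent (ZMod 2) fun i : ↑S => AG32mat.transpose i.1) hSimg)).symm
  -- now: LinearIndependent (fun i : J => Z4matᵀ i) ↔ LinearIndependent (fun i : gfun '' J => AG32matᵀ i)
  have hker : LinearMap.ker Tm.mulVecLin = ⊥ := by
    rw [LinearMap.ker_eq_bot]
    intro u v huv
    simp only [Matrix.mulVecLin_apply] at huv
    have := congrArg Tm.mulVec huv
    rwa [hTT, hTT] at this
  rw [← LinearMap.linearIndependent_iff Tm.mulVecLin hker]
  refine (linearIndependent_equiv' (R := ZMod 2) (Equiv.Set.imageOfInjOn gfun J hinjOn)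
    (f := fun i : ↑(gfun '' J) => AG32mat.transpose i.1)
    (g := ⇑Tm.mulVecLin ∘ fun i : ↑J => Z4mat.transpose i.1) ?_)
  funext x
  simp only [Function.comp_apply, Equiv.Set.imageOfInjOn, Equiv.coe_fn_mk,
    Matrix.mulVecLin_apply, Matrix.transpose_apply]
  exact (hcol x.1 (hJ8 x.1 x.2)).symm
end

section
/- The matroid E₅, represented over GF(2) by the matrix [I₅ | D] with D having columns (0,1,1,1,1)ᵀ, (1,0,1,1,1)ᵀ, (1,1,0,1,0)ᵀ, (1,1,1,1,0)ᵀ, (1,1,1,0,0)ᵀ, is self-dual: E₅ ≅ E₅*. -/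
open Matroid Set

namespace E5self

def colN : ℕ → ℕ
  | 0 => 1 | 1 => 2 | 2 => 4 | 3 => 8 | 4 => 16
  | 5 => 30 | 6 => 29 | 7 => 11 | 8 => 15 | _ => 7

def sigN : ℕ → ℕ
  | 0 => 2 | 1 => 7 | 2 => 0 | 3 => 6 | 4 => 8 | 5 => 9 | 6 => 3 | 7 => 1 | 8 => 4 | _ => 5

def sigF : Fin 10 → Fin 10 := ![2, 7, 0, 6, 8, 9, 3, 1, 4, 5]

def allB (f : ℕ → Bool) : ℕ → Bool
  | 0 => true
  | k+1 => f k && allB f k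

def anyB (f : ℕ → Bool) : ℕ → Bool
  | 0 => false
  | k+1 => f k || anyB f k

def parB (n : ℕ) : Bool :=
  (n.testBit 0).xor ((n.testBit 1).xor ((n.testBit 2).xor ((n.testBit 3).xor (n.testBit 4))))

def bg (m : ℕ) : ℕ → ℕ
  | 0 => 0
  | k+1 => (if m.testBit k then 1 else 0) + bg m k

def bcardN (m : ℕ) : ℕ := bg m 10

def mg (b : ℕ → Bool) : ℕ → ℕ
  | 0 => 0
  | k+1 => (if b k then 1 <<< k else 0) ||| mg b k

def cimN (m : ℕ) : ℕ := mg (fun k => ! m.testBit (sigN k)) 10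

def spanB (m : ℕ) : Bool :=
  allB (fun y => (y == 0) || anyB (fun j => m.testBit j && parB (y &&& colN j)) 10) 32

def FB (m : ℕ) : Bool :=
  !(bcardN m == 5 && spanB m) || ((bcardN (cimN m) == 5) && spanB (cimN m))

set_option maxRecDepth 40000 in
set_option maxHeartbeats 16000000 in
theorem master : allB FB 1024 = true := by decide

theorem allB_spec (f : ℕ → Bool) (n : ℕ) : allB f n = true ↔ ∀ k, k < n → f k = true := by
  induction n with
  | zero => simp [allB]
  | succ k ih =>
    rw [allB, Bool.and_eq_true, ih]
    constructor
    · rintro ⟨h1, h2⟩ j hj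
      rcases Nat.lt_succ_iff_lt_or_eq.1 hj with h | h
      · exact h2 j h
      · exact h ▸ h1
    · intro h
      exact ⟨h k (Nat.lt_succ_self k), fun j hj => h j (Nat.lt_succ_of_lt hj)⟩

theorem anyB_spec (f : ℕ → Bool) (n : ℕ) : anyB f n = true ↔ ∃ k, k < n ∧ f k = true := by
  induction n with
  | zero => simp [anyB]
  | succ k ih =>
    rw [anyB, Bool.or_eq_true, ih]
    constructor
    · rintro (h | ⟨j, hj, hfj⟩)
      · exact ⟨k, Nat.lt_succ_self k, h⟩
      · exact ⟨j, Nat.lt_succ_of_lt hj, hfj⟩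
    · rintro ⟨j, hj, hfj⟩
      rcases Nat.lt_succ_iff_lt_or_eq.1 hj with h | h
      · exact Or.inr ⟨j, h, hfj⟩
      · exact Or.inl (h ▸ hfj)

theorem testBit_one' (i : ℕ) : Nat.testBit 1 i = decide (i = 0) := by
  cases i with
  | zero => rfl
  | succ n => rw [Nat.testBit_succ]; simp

theorem mg_testBit (b : ℕ → Bool) (k : ℕ) : ∀ j, (mg b k).testBit j = (decide (j < k) && b j) := by
  induction k with
  | zero => intro j; simp [mg]
  | succ k ih =>
    intro j
    rw [mg, Nat.testBit_or, ih]
    by_cases hjk : j = k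
    · subst hjk
      cases hb : b j <;>
        simp [hb, Nat.testBit_shiftLeft, testBit_one']
    · rcases Nat.lt_trichotomy j k with h | h | h
      · have h1 : j < k + 1 := Nat.lt_succ_of_lt h
        have h2 : ¬ (k ≤ j) := Nat.not_le.2 h
        cases hb : b k <;> simp [Nat.testBit_shiftLeft, h, h1, h2]
      · exact absurd h hjk
      · have h1 : ¬ (j < k + 1) := by omega
        have h2 : ¬ (j < k) := by omega
        have h3 : j - k ≠ 0 := by omega
        cases hb : b k <;> simp [Nat.testBit_shiftLeft, h1, h2, h3, testBit_one', Nat.le_of_lt h]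

theorem mg_lt (b : ℕ → Bool) (k : ℕ) : mg b k < 2 ^ k := by
  induction k with
  | zero => simp [mg]
  | succ k ih =>
    rw [mg]
    refine Nat.or_lt_two_pow ?_ (lt_trans ih (Nat.pow_lt_pow_succ one_lt_two))
    split
    · rw [Nat.shiftLeft_eq, one_mul]
      exact Nat.pow_lt_pow_succ one_lt_two
    · exact Nat.two_pow_pos _

def Jset (m : ℕ) : Set (Fin 10) := {j | m.testBit j.val = true}

theorem bg_sum (m : ℕ) (k : ℕ) :
    (∑ j ∈ Finset.range k, (if m.testBit j then 1 else 0)) = bg m k := by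
  induction k with
  | zero => simp [bg]
  | succ k ih => rw [Finset.sum_range_succ, ih, bg, Nat.add_comm]

theorem Jset_ncard (m : ℕ) : (Jset m).ncard = bcardN m := by
  have h : Jset m = ↑(Finset.univ.filter fun j : Fin 10 => m.testBit j.val = true) := by
    ext j; simp [Jset]
  rw [h, Set.ncard_coe_finset, Finset.card_filter]
  have h2 : (∑ j : Fin 10, if m.testBit (j : Fin 10).val = true then 1 else 0) =
      ∑ j ∈ Finset.range 10, (if m.testBit j then 1 else 0) := by
    rw [← Fin.sum_univ_eq_sum_range (fun j => if m.testBit j then 1 else 0) 10]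
  rw [h2, bg_sum]
  rfl

noncomputable def maskOf (B : Set (Fin 10)) : ℕ :=
  mg (fun k => if h : k < 10 then
    @decide ((⟨k, h⟩ : Fin 10) ∈ B) (Classical.propDecidable _) else false) 10

theorem Jset_maskOf (B : Set (Fin 10)) : Jset (maskOf B) = B := by
  ext j
  simp only [Jset, Set.mem_setOf_eq, maskOf, mg_testBit]
  rw [dif_pos j.isLt]
  simp [j.isLt, Fin.eta]

theorem maskOf_lt (B : Set (Fin 10)) : maskOf B < 1024 := by
  have h := mg_lt (fun k => if h : k < 10 then
    @decide ((⟨k, h⟩ : Fin 10) ∈ B) (Classical.propDecidable _) else false) 10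
  norm_num at h
  exact h

theorem cimN_lt (m : ℕ) : cimN m < 1024 := by
  have h := mg_lt (fun k => ! m.testBit (sigN k)) 10
  norm_num at h
  exact h

theorem sigF_inv : Function.Involutive sigF := by intro j; revert j; decide

theorem Jset_cimN (m : ℕ) : Jset (cimN m) = (sigF '' Jset m)ᶜ := by
  have hsig : ∀ j : Fin 10, sigN j.val = (sigF j).val := by decide
  ext j
  have hbit : (cimN m).testBit j.val = ! m.testBit (sigF j).val := by
    rw [cimN, mg_testBit, hsig j]
    simp [j.isLt]
  simp only [Jset, Set.mem_setOf_eq, Set.mem_compl_iff, Set.mem_image, hbit,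
    Bool.not_eq_true']
  constructor
  · intro h hcon
    obtain ⟨b, hb', rfl⟩ := hcon
    rw [sigF_inv b] at h
    rw [h] at hb'
    exact Bool.false_ne_true hb'
  · intro h
    rw [Bool.eq_false_iff]
    intro hc
    exact h ⟨sigF j, hc, sigF_inv j⟩

def vecOf (n : ℕ) : Fin 5 → ZMod 2 := fun r => if n.testBit r.val then 1 else 0

noncomputable def maskOfY (y : Fin 5 → ZMod 2) : ℕ :=
  mg (fun k => if h : k < 5 then decide (y ⟨k, h⟩ = 1) else false) 5

theorem maskOfY_lt (y : Fin 5 → ZMod 2) : maskOfY y < 32 := by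
  have h := mg_lt (fun k => if h : k < 5 then decide (y ⟨k, h⟩ = 1) else false) 5
  norm_num at h
  exact h

theorem zmod_cases (z : ZMod 2) : z = 0 ∨ z = 1 := by revert z; decide

theorem vec_maskOfY (y : Fin 5 → ZMod 2) : vecOf (maskOfY y) = y := by
  funext r
  rw [vecOf, maskOfY, mg_testBit]
  rw [dif_pos r.isLt]
  rcases zmod_cases (y r) with h | h <;> simp [r.isLt, Fin.eta, h]

theorem vecOf_zero : vecOf 0 = 0 := by
  funext r; simp [vecOf, Nat.zero_testBit]

theorem vecOf_eq_zero {n : ℕ} (hn : n < 32) (h : vecOf n = 0) : n = 0 := by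
  apply Nat.eq_of_testBit_eq
  intro i
  rw [Nat.zero_testBit]
  by_cases hi : i < 5
  · have := congrFun h ⟨i, hi⟩
    simp only [vecOf, Pi.zero_apply] at this
    by_contra hb
    rw [Bool.not_eq_false] at hb
    rw [if_pos hb] at this
    exact one_ne_zero this
  · exact Nat.testBit_lt_two_pow (lt_of_lt_of_le hn (by
      calc (32:ℕ) = 2 ^ 5 := by norm_num
      _ ≤ 2 ^ i := Nat.pow_le_pow_right (by norm_num) (Nat.le_of_not_lt hi)))

theorem colN_lt : ∀ j : Fin 10, colN j.val < 32 := by decide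

theorem colEq : ∀ (r : Fin 5) (j : Fin 10), E5mat r j = vecOf (colN j.val) r := by
  intro r j; fin_cases r <;> fin_cases j <;> rfl

theorem dotB : ∀ a b : Fin 32,
    parB (a.val &&& b.val) = true ↔ (∑ r : Fin 5, vecOf a.val r * vecOf b.val r) = 1 := by decide

theorem zmod_ne_one {z : ZMod 2} (h : ¬ z = 1) : z = 0 := by
  rcases zmod_cases z with h0 | h1
  · exact h0
  · exact absurd h1 h

theorem spanB_spec (m : ℕ) : spanB m = true ↔
    ∀ y : Fin 5 → ZMod 2,
      (∀ j : Fin 10, m.testBit j.val = true → (∑ r : Fin 5, y r * E5mat r j) = 0) → y = 0 := by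
  rw [spanB, allB_spec]
  constructor
  · intro h y hy
    have h1 := h (maskOfY y) (maskOfY_lt y)
    rw [Bool.or_eq_true] at h1
    rcases h1 with h1 | h1
    · have h0 : maskOfY y = 0 := by simpa using h1
      rw [← vec_maskOfY y, h0, vecOf_zero]
    · exfalso
      rw [anyB_spec] at h1
      obtain ⟨j, hj10, hj⟩ := h1
      rw [Bool.and_eq_true] at hj
      set jf : Fin 10 := ⟨j, hj10⟩
      have hd := (dotB ⟨maskOfY y, maskOfY_lt y⟩ ⟨colN jf.val, colN_lt jf⟩).1 hj.2
      have h0 := hy jf hj.1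
      rw [show (∑ r : Fin 5, vecOf (maskOfY y) r * vecOf (colN jf.val) r)
            = ∑ r : Fin 5, y r * E5mat r jf from
        Finset.sum_congr rfl fun r _ => by rw [vec_maskOfY, colEq]] at hd
      rw [h0] at hd
      exact zero_ne_one hd
  · intro h y hy32
    rw [Bool.or_eq_true]
    by_cases hz : anyB (fun j => m.testBit j && parB (y &&& colN j)) 10 = true
    · right; exact hz
    · left
      have hall : ∀ j : Fin 10, m.testBit j.val = true →
          (∑ r : Fin 5, vecOf y r * vecOf (colN j.val) r) = 0 := by
        intro j hj
        apply zmod_ne_one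
        intro hc
        apply hz
        rw [anyB_spec]
        refine ⟨j.val, j.isLt, ?_⟩
        rw [Bool.and_eq_true]
        exact ⟨hj, (dotB ⟨y, hy32⟩ ⟨colN j.val, colN_lt j⟩).2 hc⟩
      have h0 : vecOf y = 0 := by
        apply h
        intro j hj
        have := hall j hj
        rwa [show (∑ r : Fin 5, vecOf y r * vecOf (colN j.val) r)
              = ∑ r : Fin 5, vecOf y r * E5mat r j from
          Finset.sum_congr rfl fun r _ => by rw [colEq]] at this
      have := vecOf_eq_zero hy32 h0
      simp [this]

theorem orth_iff_span (K : Set (Fin 10)) :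
    (∀ y : Fin 5 → ZMod 2,
        (∀ j : Fin 10, j ∈ K → (∑ r : Fin 5, y r * E5mat r j) = 0) → y = 0) ↔
    Submodule.span (ZMod 2) (Set.range fun i : K => E5mat.transpose i.1) = ⊤ := by
  constructor
  · intro h
    by_contra hne
    obtain ⟨f, hf0, hfbot⟩ := Submodule.exists_dual_map_eq_bot_of_lt_top
      (lt_top_iff_ne_top.2 hne) inferInstance
    set y : Fin 5 → ZMod 2 := fun r => f (fun s => if r = s then 1 else 0) with hy
    have hfx : ∀ x : Fin 5 → ZMod 2, f x = ∑ r, x r * y r := by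
      intro x
      rw [LinearMap.pi_apply_eq_sum_univ f x]
      refine Finset.sum_congr rfl fun r _ => ?_
      rw [smul_eq_mul, hy]
    have hyz : y = 0 := by
      apply h
      intro j hj
      have hmem : E5mat.transpose j ∈
          Submodule.span (ZMod 2) (Set.range fun i : K => E5mat.transpose i.1) :=
        Submodule.subset_span ⟨⟨j, hj⟩, rfl⟩
      have hf : f (E5mat.transpose j) = 0 := by
        have h2 : f (E5mat.transpose j) ∈ Submodule.map f
            (Submodule.span (ZMod 2) (Set.range fun i : K => E5mat.transpose i.1)) :=
          Submodule.mem_map_of_mem hmem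
        rw [hfbot] at h2
        exact (Submodule.mem_bot _).1 h2
      rw [hfx] at hf
      rw [show (∑ r : Fin 5, y r * E5mat r j) = ∑ r : Fin 5, (E5mat.transpose j) r * y r from
        Finset.sum_congr rfl fun r _ => by rw [Matrix.transpose_apply, mul_comm]]
      exact hf
    apply hf0
    apply LinearMap.ext
    intro x
    rw [hfx, hyz]
    simp
  · intro hspan y hy
    set φ : (Fin 5 → ZMod 2) →ₗ[ZMod 2] ZMod 2 := ∑ r, y r • LinearMap.proj r with hφdef
    have hφ : ∀ x, φ x = ∑ r, y r * x r := by
      intro x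
      rw [hφdef]
      simp [LinearMap.sum_apply, LinearMap.smul_apply, LinearMap.proj_apply, smul_eq_mul]
    have hker : ∀ v, φ v = 0 := by
      have hle : Submodule.span (ZMod 2) (Set.range fun i : K => E5mat.transpose i.1) ≤
          LinearMap.ker φ := by
        rw [Submodule.span_le]
        rintro _ ⟨i, rfl⟩
        rw [SetLike.mem_coe, LinearMap.mem_ker, hφ]
        exact hy i.1 i.2
      intro v
      have hv : v ∈ LinearMap.ker φ := hle (hspan ▸ Submodule.mem_top)
      exact LinearMap.mem_ker.1 hv
    funext r
    have h1 := hker (fun s => if r = s then 1 else 0)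
    rw [hφ] at h1
    simpa using h1

end E5self

namespace E5self

variable {M : Matroid (Fin 10)}

theorem indep_ncard_le (hM : IsBinaryRep E5mat M) {B : Set (Fin 10)} (hB : M.Indep B) :
    B.ncard ≤ 5 := by
  have hli := (hM.2 B).1 hB
  letI : Fintype ↥B := Fintype.ofFinite _
  have hcard := hli.fintype_card_le_finrank
  rw [Module.finrank_fintype_fun_eq_card, Fintype.card_fin] at hcard
  rwa [← Nat.card_coe_set_eq, Nat.card_eq_fintype_card]

theorem base_of_indep_card (hM : IsBinaryRep E5mat M) {B : Set (Fin 10)}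
    (hi : M.Indep B) (hc : B.ncard = 5) : M.IsBase B := by
  rw [Matroid.isBase_iff_maximal_indep]
  refine ⟨hi, fun J hJ hBJ => ?_⟩
  have hBJ' : B ⊆ J := hBJ
  have hcard : J.ncard ≤ B.ncard := by rw [hc]; exact indep_ncard_le hM hJ
  have : B = J := Set.eq_of_subset_of_ncard_le hBJ' hcard (Set.toFinite J)
  exact this.ge

theorem indep_of_span (hM : IsBinaryRep E5mat M) {m : ℕ}
    (hm5 : bcardN m = 5) (hsp : spanB m = true) :
    M.Indep (Jset m) ∧ (Jset m).ncard = 5 := by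
  have horth := (spanB_spec m).1 hsp
  have hspan := (orth_iff_span (Jset m)).1 horth
  have hncard : (Jset m).ncard = 5 := by rw [Jset_ncard]; exact hm5
  letI : Fintype ↥(Jset m) := Fintype.ofFinite _
  have hcard5 : Fintype.card ↥(Jset m) = 5 := by
    rw [← Nat.card_eq_fintype_card, Nat.card_coe_set_eq]; exact hncard
  have hli : LinearIndependent (ZMod 2) (fun i : ↥(Jset m) => E5mat.transpose i.1) :=
    linearIndependent_of_top_le_span_of_card_eq_finrank hspan.ge
      (by rw [hcard5, Module.finrank_fintype_fun_eq_card, Fintype.card_fin])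
  exact ⟨(hM.2 _).2 hli, hncard⟩

theorem base_of_mask (hM : IsBinaryRep E5mat M) {m : ℕ}
    (hm5 : bcardN m = 5) (hsp : spanB m = true) : M.IsBase (Jset m) := by
  obtain ⟨hi, hc⟩ := indep_of_span hM hm5 hsp
  exact base_of_indep_card hM hi hc

theorem base_iff (hM : IsBinaryRep E5mat M) {B : Set (Fin 10)} :
    M.IsBase B ↔ M.Indep B ∧ B.ncard = 5 := by
  constructor
  · intro hB
    have hB0 : M.IsBase (Jset 31) := base_of_mask hM (by decide) (by decide)
    have h0c : (Jset 31).ncard = 5 := by rw [Jset_ncard]; decide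
    exact ⟨hB.indep, by rw [hB.ncard_eq_ncard_of_isBase hB0, h0c]⟩
  · rintro ⟨hi, hc⟩
    exact base_of_indep_card hM hi hc

theorem bools_of_base (hM : IsBinaryRep E5mat M) {B : Set (Fin 10)} (hB : M.IsBase B) :
    bcardN (maskOf B) = 5 ∧ spanB (maskOf B) = true := by
  obtain ⟨hind, hnc⟩ := (base_iff hM).1 hB
  have hJB := Jset_maskOf B
  constructor
  · rw [← Jset_ncard, hJB]; exact hnc
  · rw [spanB_spec]
    letI : Fintype ↥B := Fintype.ofFinite _
    have hli := (hM.2 B).1 hind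
    have hcard5 : Fintype.card ↥B = 5 := by
      rw [← Nat.card_eq_fintype_card, Nat.card_coe_set_eq]; exact hnc
    have hspan := hli.span_eq_top_of_card_eq_finrank'
      (by rw [hcard5, Module.finrank_fintype_fun_eq_card, Fintype.card_fin])
    have horth := (orth_iff_span B).2 hspan
    intro y hy
    apply horth y
    intro j hj
    apply hy j
    show j ∈ Jset (maskOf B)
    rw [hJB]
    exact hj

theorem keyOf (m : ℕ) (hm : m < 1024) (h5 : bcardN m = 5) (hsp : spanB m = true) :
    bcardN (cimN m) = 5 ∧ spanB (cimN m) = true := by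
  have h := (allB_spec FB 1024).1 master m hm
  rw [FB, Bool.or_eq_true, Bool.not_eq_true', Bool.and_eq_true] at h
  rcases h with h | ⟨h1, h2⟩
  · rw [Bool.and_eq_false_iff] at h
    rcases h with h | h
    · rw [h5] at h; simp at h
    · rw [hsp] at h; simp at h
  · exact ⟨by simpa using h1, h2⟩

theorem main_iff (hM : IsBinaryRep E5mat M) (J : Set (Fin 10)) :
    M.Indep J ↔ M✶.Indep (sigF '' J) := by
  constructor
  · intro hJ
    obtain ⟨B, hB, hJB⟩ := hJ.exists_isBase_superset
    obtain ⟨h5, hsp⟩ := bools_of_base hM hB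
    obtain ⟨hc5, hcsp⟩ := keyOf (maskOf B) (maskOf_lt B) h5 hsp
    have hB' : M.IsBase (Jset (cimN (maskOf B))) := base_of_mask hM hc5 hcsp
    rw [Matroid.dual_indep_iff_exists']
    refine ⟨by rw [hM.1]; exact Set.subset_univ _, _, hB', ?_⟩
    rw [Jset_cimN, Jset_maskOf]
    exact (disjoint_compl_right).mono_left (Set.image_mono hJB)
  · intro hJ
    rw [Matroid.dual_indep_iff_exists'] at hJ
    obtain ⟨-, B₁, hB₁, hdis⟩ := hJ
    obtain ⟨h5, hsp⟩ := bools_of_base hM hB₁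
    obtain ⟨hc5, hcsp⟩ := keyOf (maskOf B₁) (maskOf_lt B₁) h5 hsp
    have hB' : M.IsBase (Jset (cimN (maskOf B₁))) := base_of_mask hM hc5 hcsp
    refine hB'.indep.subset ?_
    rw [Jset_cimN, Jset_maskOf]
    intro j hj
    intro hcon
    obtain ⟨b, hb, rfl⟩ := hcon
    have h1 : sigF (sigF b) ∈ sigF '' J := ⟨sigF b, hj, rfl⟩
    rw [sigF_inv b] at h1
    exact Set.disjoint_left.1 hdis h1 hb

end E5self

/-- The matroid E₅ is self-dual. -/
theorem stmt_10 (M : Matroid (Fin 10)) (hM : IsBinaryRep E5mat M) :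
    MatroidIso M M✶ := by
  have hE : M.E = Set.univ := hM.1
  have hE' : M✶.E = Set.univ := by rw [Matroid.dual_ground, hE]
  refine ⟨⟨fun x => ⟨E5self.sigF x.1, by rw [hE']; trivial⟩,
          fun x => ⟨E5self.sigF x.1, by rw [hE]; trivial⟩,
          fun x => Subtype.ext (E5self.sigF_inv x.1),
          fun x => Subtype.ext (E5self.sigF_inv x.1)⟩, ?_⟩
  intro I
  have := E5self.main_iff hM (((↑) : ↥M.E → Fin 10) '' I)
  simp only [Set.image_image] at this ⊢
  exact this
end

section
/- The dual of the rank-4 binary matroid D₁ (the extension of P₉ by the column (1,1,1,0)ᵀ) is isomorphic to (P_Δ(F₇, F₇) \ z)*, where P_Δ(F₇, F₇) is the generalized parallel connection of two copies of the Fano matroid across a triangle and z is an element of that triangle. -/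
open Matroid Set

def Tm19 : Matrix (Fin 4) (Fin 4) (ZMod 2) := !![0,0,0,1; 0,1,0,0; 0,0,1,1; 1,1,0,0]
def Ti19 : Matrix (Fin 4) (Fin 4) (ZMod 2) := !![0,1,0,1; 0,1,0,0; 1,0,1,0; 1,0,0,0]

def fsig : Fin 10 → Fin 11 := ![7,9,3,4,10,8,6,2,1,5]

lemma fsig_inj : Function.Injective fsig := by decide

instance Tm19_inv : Invertible Tm19 := ⟨Ti19, by decide, by decide⟩

lemma hcol19 : ∀ j : Fin 10,
    Tm19.mulVec (D1mat.transpose j) = PFFmat.transpose (fsig j) := by decide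

lemma matroidIso_map {α β : Type*} (M : Matroid α) (f : α → β)
    (hf : Set.InjOn f M.E) : MatroidIso M (M.map f hf) := by
  refine ⟨Equiv.Set.imageOfInjOn f M.E hf, fun I => ?_⟩
  have himg : ((↑) '' (⇑(Equiv.Set.imageOfInjOn f M.E hf) '' I) : Set β)
      = f '' ((↑) '' I) := by
    rw [Set.image_image, Set.image_image]
    rfl
  exact Iff.trans (Matroid.map_image_indep_iff (Subtype.coe_image_subset _ _)).symm
    (iff_of_eq (congrArg (M.map f hf).Indep himg.symm))

lemma indep_transfer (D1 : Matroid (Fin 10)) (hD1 : IsBinaryRep D1mat D1)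
    (G : Matroid (Fin 11)) (hG : IsBinaryRep PFFmat G) (I : Set (Fin 10)) :
    D1.Indep I ↔ G.Indep (fsig '' I) := by
  rw [hD1.2, hG.2]
  set e : (Fin 4 → ZMod 2) ≃ₗ[ZMod 2] (Fin 4 → ZMod 2) := Tm19.toLinearEquiv' Tm19_inv with he_def
  have step1 : LinearIndependent (ZMod 2) (fun i : I => D1mat.transpose i.1) ↔
      LinearIndependent (ZMod 2) (fun i : I => PFFmat.transpose (fsig i.1)) := by
    rw [show (fun i : I => PFFmat.transpose (fsig i.1)) =
        (e.toLinearMap) ∘ (fun i : I => D1mat.transpose i.1) by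
      funext i
      show PFFmat.transpose (fsig i.1) = e (D1mat.transpose i.1)
      rw [show e (D1mat.transpose i.1) = Tm19.mulVec (D1mat.transpose i.1) from rfl, hcol19]]
    exact (LinearMap.linearIndependent_iff e.toLinearMap
      (LinearMap.ker_eq_bot_of_injective e.injective)).symm
  rw [step1]
  exact linearIndependent_equiv' (Equiv.Set.imageOfInjOn fsig I (fsig_inj.injOn))
    (f := fun i : (fsig '' I : Set (Fin 11)) => PFFmat.transpose i.1) (by funext i; rfl)

lemma del_eq_map (D1 : Matroid (Fin 10)) (hD1 : IsBinaryRep D1mat D1)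
    (G : Matroid (Fin 11)) (hG : IsBinaryRep PFFmat G) :
    G.del {0} = D1.map fsig (fsig_inj.injOn) := by
  have hrange : Set.range fsig = Set.univ \ ({0} : Set (Fin 11)) := by
    ext x; simp only [Set.mem_range, Set.mem_diff, Set.mem_univ, true_and,
      Set.mem_singleton_iff]
    revert x; decide
  refine Matroid.ext_indep ?_ ?_
  · show G.E \ {0} = fsig '' D1.E
    rw [hG.1, hD1.1, Set.image_univ, hrange]
  · intro I hI
    have hIsub : I ⊆ Set.univ \ ({0} : Set (Fin 11)) := by
      rwa [show (G.del {0}).E = G.E \ {0} from rfl, hG.1] at hI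
    rw [show (G.del {0}).Indep I ↔ G.Indep I ∧ I ⊆ G.E \ {0} from Iff.rfl, hG.1,
      Matroid.map_indep_iff]
    constructor
    · rintro ⟨hGI, -⟩
      have himg : fsig '' (fsig ⁻¹' I) = I :=
        Set.image_preimage_eq_of_subset (by rw [hrange]; exact hIsub)
      exact ⟨fsig ⁻¹' I, by rw [indep_transfer D1 hD1 G hG, himg]; exact hGI, himg.symm⟩
    · rintro ⟨I₀, hI₀, rfl⟩
      exact ⟨(indep_transfer D1 hD1 G hG I₀).1 hI₀,
        (Set.image_subset_range _ _).trans (by rw [hrange])⟩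

/-- The dual of D₁ is isomorphic to (P_Δ(F₇, F₇) \ z)* for some element z of the common
triangle (columns {0, 1, 2}). -/
theorem stmt_19 (D1 : Matroid (Fin 10)) (hD1 : IsBinaryRep D1mat D1)
    (G : Matroid (Fin 11)) (hG : IsBinaryRep PFFmat G) :
    ∃ z ∈ ({0, 1, 2} : Set (Fin 11)), MatroidIso D1✶ ((G.del {z})✶) := by
  refine ⟨0, by simp, ?_⟩
  rw [del_eq_map D1 hD1 G hG, Matroid.map_dual]
  exact matroidIso_map D1✶ fsig _
end
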